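/- (Layer-specific target bound) In the N-layer setting with h = f_i ∘ g_i, for each layer division i: R_T(h) ≤ R_S(h) + d_{F_iΔF_i}(p_S^{g_i}, p_T^{g_i}) + d_{(F_i)_{G_iΔG_i}}(p_S, p_T) + λ_{F_iG_i}(g_i), where λ_{F_iG_i}(g_i) = inf_{f' ∈ F_i, g' ∈ G_i} [2R_S(f'g_i) + R_S(f'g') + R_T(f'g')]. -/

import Mathlib

open MeasureTheory

/-- Zero-one disagreement risk between two hypotheses under distribution `p`. -/
noncomputable def risk {X : Type*} [MeasurableSpace X] (p : Measure X)
    (h h' : X → Bool) : ℝ :=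
  ∫ x, (if h x = h' x then (0 : ℝ) else 1) ∂p

set_option maxHeartbeats 1000000

section helpers
variable {X : Type*} [MeasurableSpace X] {p : Measure X} [IsProbabilityMeasure p]

lemma ind_eq (h h' : X → Bool) :
    (fun x => (if h x = h' x then (0:ℝ) else 1)) =
      Set.indicator {x | ¬ h x = h' x} (fun _ => 1) := by
  ext x; by_cases hx : h x = h' x <;> simp [Set.indicator, hx]

lemma mset {h h' : X → Bool} (hh : Measurable h) (hh' : Measurable h') :
    MeasurableSet {x | ¬ h x = h' x} :=
  (measurableSet_eq_fun hh hh').compl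

lemma risk_integrable {h h' : X → Bool} (hh : Measurable h) (hh' : Measurable h') :
    Integrable (fun x => (if h x = h' x then (0:ℝ) else 1)) p := by
  rw [ind_eq]
  exact (integrable_const 1).indicator (mset hh hh')

lemma risk_nonneg (h h' : X → Bool) : 0 ≤ risk p h h' := by
  apply integral_nonneg
  intro x; by_cases hx : h x = h' x <;> simp [hx]

lemma risk_le_one {h h' : X → Bool} (hh : Measurable h) (hh' : Measurable h') :
    risk p h h' ≤ 1 := by
  have := integral_mono (μ := p) (risk_integrable hh hh') (integrable_const 1)
    (fun x => by by_cases hx : h x = h' x <;> simp [hx])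
  simpa [risk] using this

lemma risk_comm (h h' : X → Bool) : risk p h h' = risk p h' h := by
  unfold risk; congr 1; ext x; by_cases hx : h x = h' x <;> simp [hx, eq_comm] <;> tauto

lemma risk_triangle {a b c : X → Bool} (ha : Measurable a) (hb : Measurable b)
    (hc : Measurable c) : risk p a c ≤ risk p a b + risk p b c := by
  unfold risk
  rw [← integral_add (risk_integrable ha hb) (risk_integrable hb hc)]
  apply integral_mono (risk_integrable ha hc)
    ((risk_integrable ha hb).add (risk_integrable hb hc))
  have key : ∀ u v w : Bool, (if u = w then (0:ℝ) else 1) ≤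
      (if u = v then 0 else 1) + (if v = w then 0 else 1) := by
    intro u v w; cases u <;> cases v <;> cases w <;> norm_num
  intro x; exact key _ _ _
end helpers

/-- Layer-specific target bound for a division `h = f_i ∘ g_i`. -/
theorem layer_specific_bound {X Z : Type*} [MeasurableSpace X]
    (pS pT : Measure X) [IsProbabilityMeasure pS] [IsProbabilityMeasure pT]
    (htrue : X → Bool) (hmtrue : Measurable htrue)
    (Fi : Set (Z → Bool)) (Gi : Set (X → Z))
    (hFne : Fi.Nonempty) (hGne : Gi.Nonempty)
    (hm : ∀ f ∈ Fi, ∀ g ∈ Gi, Measurable (f ∘ g))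
    (fi : Z → Bool) (hfi : fi ∈ Fi) (gi : X → Z) (hgi : gi ∈ Gi) :
    risk pT (fi ∘ gi) htrue ≤
      risk pS (fi ∘ gi) htrue +
      (⨆ f : Fi, ⨆ f' : Fi,
        |risk pS ((f : Z → Bool) ∘ gi) ((f' : Z → Bool) ∘ gi) -
          risk pT ((f : Z → Bool) ∘ gi) ((f' : Z → Bool) ∘ gi)|) +
      (⨆ f : Fi, ⨆ g : Gi, ⨆ g' : Gi,
        |risk pS ((f : Z → Bool) ∘ (g : X → Z)) ((f : Z → Bool) ∘ (g' : X → Z)) -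
          risk pT ((f : Z → Bool) ∘ (g : X → Z)) ((f : Z → Bool) ∘ (g' : X → Z))|) +
      (⨅ f' : Fi, ⨅ g' : Gi,
        2 * risk pS ((f' : Z → Bool) ∘ gi) htrue +
          risk pS ((f' : Z → Bool) ∘ (g' : X → Z)) htrue +
          risk pT ((f' : Z → Bool) ∘ (g' : X → Z)) htrue) := by
  haveI : Nonempty Fi := hFne.to_subtype
  haveI : Nonempty Gi := hGne.to_subtype
  have habs : ∀ (a b : X → Bool), Measurable a → Measurable b →
      |risk pS a b - risk pT a b| ≤ 2 := by
    intro a b ha hb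
    have h1 := risk_nonneg (p := pS) a b
    have h2 := risk_le_one (p := pS) ha hb
    have h3 := risk_nonneg (p := pT) a b
    have h4 := risk_le_one (p := pT) ha hb
    rw [abs_le]; constructor <;> linarith
  rw [← sub_le_iff_le_add']
  refine le_ciInf fun f' => le_ciInf fun g' => ?_
  rw [sub_le_iff_le_add']
  have ma : Measurable (fi ∘ gi) := hm fi hfi gi hgi
  have mb : Measurable ((f' : Z → Bool) ∘ gi) := hm _ f'.2 gi hgi
  have mc : Measurable ((f' : Z → Bool) ∘ (g' : X → Z)) := hm _ f'.2 _ g'.2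
  -- triangle inequalities
  have t1 : risk pT (fi ∘ gi) htrue ≤
      risk pT (fi ∘ gi) ((f' : Z → Bool) ∘ gi) + risk pT ((f' : Z → Bool) ∘ gi) htrue := by
    have h := risk_triangle (p := pT) ma mb hmtrue
    linarith [risk_comm (p := pT) (fi ∘ gi) ((f' : Z → Bool) ∘ gi)]
  have t2 : risk pT ((f' : Z → Bool) ∘ gi) htrue ≤
      risk pT ((f' : Z → Bool) ∘ gi) ((f' : Z → Bool) ∘ (g' : X → Z)) +
        risk pT ((f' : Z → Bool) ∘ (g' : X → Z)) htrue :=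
    risk_triangle (p := pT) mb mc hmtrue
  have t3 : risk pS (fi ∘ gi) ((f' : Z → Bool) ∘ gi) ≤
      risk pS (fi ∘ gi) htrue + risk pS ((f' : Z → Bool) ∘ gi) htrue := by
    have h := risk_triangle (p := pS) ma hmtrue mb
    rwa [risk_comm (p := pS) htrue] at h
  have t4 : risk pS ((f' : Z → Bool) ∘ gi) ((f' : Z → Bool) ∘ (g' : X → Z)) ≤
      risk pS ((f' : Z → Bool) ∘ gi) htrue +
        risk pS ((f' : Z → Bool) ∘ (g' : X → Z)) htrue := by
    have h := risk_triangle (p := pS) mb hmtrue mc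
    rwa [risk_comm (p := pS) htrue] at h
  -- sup bounds
  have hs1 : |risk pS (fi ∘ gi) ((f' : Z → Bool) ∘ gi) -
      risk pT (fi ∘ gi) ((f' : Z → Bool) ∘ gi)| ≤
      ⨆ f : Fi, ⨆ f'' : Fi,
        |risk pS ((f : Z → Bool) ∘ gi) ((f'' : Z → Bool) ∘ gi) -
          risk pT ((f : Z → Bool) ∘ gi) ((f'' : Z → Bool) ∘ gi)| := by
    have step1 : |risk pS (fi ∘ gi) ((f' : Z → Bool) ∘ gi) -
        risk pT (fi ∘ gi) ((f' : Z → Bool) ∘ gi)| ≤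
        ⨆ f'' : Fi, |risk pS (fi ∘ gi) ((f'' : Z → Bool) ∘ gi) -
          risk pT (fi ∘ gi) ((f'' : Z → Bool) ∘ gi)| := by
      refine le_ciSup (f := fun f'' : Fi => |risk pS (fi ∘ gi) ((f'' : Z → Bool) ∘ gi) -
          risk pT (fi ∘ gi) ((f'' : Z → Bool) ∘ gi)|) ?_ f'
      exact ⟨2, by rintro _ ⟨f'', rfl⟩; exact habs _ _ ma (hm _ f''.2 gi hgi)⟩
    refine step1.trans ?_
    refine le_ciSup (f := fun f : Fi => ⨆ f'' : Fi,
        |risk pS ((f : Z → Bool) ∘ gi) ((f'' : Z → Bool) ∘ gi) -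
          risk pT ((f : Z → Bool) ∘ gi) ((f'' : Z → Bool) ∘ gi)|) ?_ ⟨fi, hfi⟩
    refine ⟨2, ?_⟩
    rintro _ ⟨f, rfl⟩
    exact ciSup_le fun f'' => habs _ _ (hm _ f.2 gi hgi) (hm _ f''.2 gi hgi)
  have hs2 : |risk pS ((f' : Z → Bool) ∘ gi) ((f' : Z → Bool) ∘ (g' : X → Z)) -
      risk pT ((f' : Z → Bool) ∘ gi) ((f' : Z → Bool) ∘ (g' : X → Z))| ≤
      ⨆ f : Fi, ⨆ g : Gi, ⨆ g'' : Gi,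
        |risk pS ((f : Z → Bool) ∘ (g : X → Z)) ((f : Z → Bool) ∘ (g'' : X → Z)) -
          risk pT ((f : Z → Bool) ∘ (g : X → Z)) ((f : Z → Bool) ∘ (g'' : X → Z))| := by
    have step1 : |risk pS ((f' : Z → Bool) ∘ gi) ((f' : Z → Bool) ∘ (g' : X → Z)) -
        risk pT ((f' : Z → Bool) ∘ gi) ((f' : Z → Bool) ∘ (g' : X → Z))| ≤
        ⨆ g'' : Gi, |risk pS ((f' : Z → Bool) ∘ gi) ((f' : Z → Bool) ∘ (g'' : X → Z)) -
          risk pT ((f' : Z → Bool) ∘ gi) ((f' : Z → Bool) ∘ (g'' : X → Z))| := by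
      refine le_ciSup (f := fun g'' : Gi =>
        |risk pS ((f' : Z → Bool) ∘ gi) ((f' : Z → Bool) ∘ (g'' : X → Z)) -
          risk pT ((f' : Z → Bool) ∘ gi) ((f' : Z → Bool) ∘ (g'' : X → Z))|) ?_ g'
      exact ⟨2, by rintro _ ⟨g'', rfl⟩; exact habs _ _ mb (hm _ f'.2 _ g''.2)⟩
    refine step1.trans ?_
    have step2 : (⨆ g'' : Gi,
        |risk pS ((f' : Z → Bool) ∘ gi) ((f' : Z → Bool) ∘ (g'' : X → Z)) -
          risk pT ((f' : Z → Bool) ∘ gi) ((f' : Z → Bool) ∘ (g'' : X → Z))|) ≤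
        ⨆ g : Gi, ⨆ g'' : Gi,
        |risk pS ((f' : Z → Bool) ∘ (g : X → Z)) ((f' : Z → Bool) ∘ (g'' : X → Z)) -
          risk pT ((f' : Z → Bool) ∘ (g : X → Z)) ((f' : Z → Bool) ∘ (g'' : X → Z))| := by
      refine le_ciSup (f := fun g : Gi => ⨆ g'' : Gi,
        |risk pS ((f' : Z → Bool) ∘ (g : X → Z)) ((f' : Z → Bool) ∘ (g'' : X → Z)) -
          risk pT ((f' : Z → Bool) ∘ (g : X → Z)) ((f' : Z → Bool) ∘ (g'' : X → Z))|) ?_ ⟨gi, hgi⟩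
      refine ⟨2, ?_⟩
      rintro _ ⟨g, rfl⟩
      exact ciSup_le fun g'' => habs _ _ (hm _ f'.2 _ g.2) (hm _ f'.2 _ g''.2)
    refine step2.trans ?_
    refine le_ciSup (f := fun f : Fi => ⨆ g : Gi, ⨆ g'' : Gi,
        |risk pS ((f : Z → Bool) ∘ (g : X → Z)) ((f : Z → Bool) ∘ (g'' : X → Z)) -
          risk pT ((f : Z → Bool) ∘ (g : X → Z)) ((f : Z → Bool) ∘ (g'' : X → Z))|) ?_ f'
    refine ⟨2, ?_⟩
    rintro _ ⟨f, rfl⟩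
    exact ciSup_le fun g => ciSup_le fun g'' => habs _ _ (hm _ f.2 _ g.2) (hm _ f.2 _ g''.2)
  have d1 : risk pT (fi ∘ gi) ((f' : Z → Bool) ∘ gi) ≤
      risk pS (fi ∘ gi) ((f' : Z → Bool) ∘ gi) +
      ⨆ f : Fi, ⨆ f'' : Fi,
        |risk pS ((f : Z → Bool) ∘ gi) ((f'' : Z → Bool) ∘ gi) -
          risk pT ((f : Z → Bool) ∘ gi) ((f'' : Z → Bool) ∘ gi)| := by
    have h := le_abs_self (risk pT (fi ∘ gi) ((f' : Z → Bool) ∘ gi) -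
      risk pS (fi ∘ gi) ((f' : Z → Bool) ∘ gi))
    rw [abs_sub_comm] at h
    linarith
  have d2 : risk pT ((f' : Z → Bool) ∘ gi) ((f' : Z → Bool) ∘ (g' : X → Z)) ≤
      risk pS ((f' : Z → Bool) ∘ gi) ((f' : Z → Bool) ∘ (g' : X → Z)) +
      ⨆ f : Fi, ⨆ g : Gi, ⨆ g'' : Gi,
        |risk pS ((f : Z → Bool) ∘ (g : X → Z)) ((f : Z → Bool) ∘ (g'' : X → Z)) -
          risk pT ((f : Z → Bool) ∘ (g : X → Z)) ((f : Z → Bool) ∘ (g'' : X → Z))| := by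
    have h := le_abs_self (risk pT ((f' : Z → Bool) ∘ gi) ((f' : Z → Bool) ∘ (g' : X → Z)) -
      risk pS ((f' : Z → Bool) ∘ gi) ((f' : Z → Bool) ∘ (g' : X → Z)))
    rw [abs_sub_comm] at h
    linarith
  linarith
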